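/- Let M be a minimal pomset recognizer, q a state of M, and w an access sequence of q. Then there exists an access sequence w' of q admitting an evaluation tree with no repetition of states along any root-to-leaf branch. -/
import Mathlib


/-- Syntactic terms for series-parallel pomsets over alphabet `σ`. -/
inductive SPTerm (σ : Type) : Type
  | eps : SPTerm σ
  | letter (a : σ) : SPTerm σ
  | seq (t u : SPTerm σ) : SPTerm σ
  | par (t u : SPTerm σ) : SPTerm σ

/-- Semantic equality of terms: the congruence generated by associativity of
both compositions, commutativity of `par`, and neutrality of `eps`.
By freeness of SP in the variety of bimonoids, two terms denote the same
series-parallel pomset iff they are related by this relation. -/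
inductive SPEquiv {σ : Type} : SPTerm σ → SPTerm σ → Prop
  | refl (t) : SPEquiv t t
  | symm {t u} : SPEquiv t u → SPEquiv u t
  | trans {t u v} : SPEquiv t u → SPEquiv u v → SPEquiv t v
  | seq_congr {t t' u u'} : SPEquiv t t' → SPEquiv u u' → SPEquiv (.seq t u) (.seq t' u')
  | par_congr {t t' u u'} : SPEquiv t t' → SPEquiv u u' → SPEquiv (.par t u) (.par t' u')
  | seq_assoc (t u v) : SPEquiv (.seq (.seq t u) v) (.seq t (.seq u v))
  | par_assoc (t u v) : SPEquiv (.par (.par t u) v) (.par t (.par u v))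
  | par_comm (t u) : SPEquiv (.par t u) (.par u t)
  | seq_eps_left (t) : SPEquiv (.seq .eps t) t
  | seq_eps_right (t) : SPEquiv (.seq t .eps) t
  | par_eps (t) : SPEquiv (.par t .eps) t

def SPSetoid (σ : Type) : Setoid (SPTerm σ) :=
  ⟨SPEquiv, ⟨SPEquiv.refl, SPEquiv.symm, SPEquiv.trans⟩⟩

/-- Series-parallel pomsets over `σ`. -/
def SP (σ : Type) : Type := Quotient (SPSetoid σ)

def SP.mk {σ : Type} (t : SPTerm σ) : SP σ := Quotient.mk (SPSetoid σ) t

/-- The empty pomset ε. -/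
def SP.eps {σ : Type} : SP σ := SP.mk .eps

/-- The singleton pomset labelled by `a`. -/
def SP.letter {σ : Type} (a : σ) : SP σ := SP.mk (.letter a)

/-- Sequential composition of series-parallel pomsets. -/
def SP.seq {σ : Type} : SP σ → SP σ → SP σ :=
  Quotient.map₂ SPTerm.seq (fun _ _ h _ _ h' => SPEquiv.seq_congr h h')

/-- Parallel composition of series-parallel pomsets. -/
def SP.par {σ : Type} : SP σ → SP σ → SP σ :=
  Quotient.map₂ SPTerm.par (fun _ _ h _ _ h' => SPEquiv.par_congr h h')

/-- A bimonoid structure on `M`: two associative operations, `par`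
additionally commutative, sharing the neutral element `one`. -/
structure BimonoidStr (M : Type) where
  seq : M → M → M
  par : M → M → M
  one : M
  seq_assoc : ∀ a b c, seq (seq a b) c = seq a (seq b c)
  par_assoc : ∀ a b c, par (par a b) c = par a (par b c)
  par_comm : ∀ a b, par a b = par b a
  seq_one : ∀ a, seq a one = a
  one_seq : ∀ a, seq one a = a
  par_one : ∀ a, par a one = a

/-- Evaluation of a term in a bimonoid, extending `i : σ → M`. -/
def termEval {σ M : Type} (str : BimonoidStr M) (i : σ → M) : SPTerm σ → M
  | .eps => str.one
  | .letter a => i a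
  | .seq t u => str.seq (termEval str i t) (termEval str i u)
  | .par t u => str.par (termEval str i t) (termEval str i u)

theorem termEval_congr {σ M : Type} (str : BimonoidStr M) (i : σ → M)
    {t u : SPTerm σ} (h : SPEquiv t u) : termEval str i t = termEval str i u := by
  induction h with
  | refl => rfl
  | symm _ ih => exact ih.symm
  | trans _ _ ih1 ih2 => exact ih1.trans ih2
  | seq_congr _ _ ih1 ih2 => simp only [termEval, ih1, ih2]
  | par_congr _ _ ih1 ih2 => simp only [termEval, ih1, ih2]
  | seq_assoc t u v => simp only [termEval]; exact str.seq_assoc _ _ _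
  | par_assoc t u v => simp only [termEval]; exact str.par_assoc _ _ _
  | par_comm t u => simp only [termEval]; exact str.par_comm _ _
  | seq_eps_left t => simp only [termEval]; exact str.one_seq _
  | seq_eps_right t => simp only [termEval]; exact str.seq_one _
  | par_eps t => simp only [termEval]; exact str.par_one _

/-- A pomset recognizer with state set `M`: a finite bimonoid together with
an interpretation of letters and a set of accepting states. -/
structure Recognizer (σ M : Type) where
  fin : Finite M
  str : BimonoidStr M
  i : σ → M
  F : Set M

/-- The unique homomorphic extension of `R.i` to series-parallel pomsets. -/
def Recognizer.eval {σ M : Type} (R : Recognizer σ M) : SP σ → M :=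
  Quotient.lift (termEval R.str R.i) (fun _ _ h => termEval_congr R.str R.i h)

/-- `R` accepts the pomset `w`. -/
def Recognizer.accepts {σ M : Type} (R : Recognizer σ M) (w : SP σ) : Prop :=
  R.eval w ∈ R.F

/-- The language of a recognizer. -/
def Recognizer.lang {σ M : Type} (R : Recognizer σ M) : Set (SP σ) :=
  {w | R.accepts w}

/-- 1-contexts: series-parallel pomsets with exactly one placeholder □. -/
inductive Ctx (σ : Type) : Type
  | hole : Ctx σ
  | seqL (c : Ctx σ) (w : SP σ) : Ctx σ
  | seqR (w : SP σ) (c : Ctx σ) : Ctx σ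
  | parL (c : Ctx σ) (w : SP σ) : Ctx σ
  | parR (w : SP σ) (c : Ctx σ) : Ctx σ

/-- Substitution of a pomset for the placeholder of a context: `c[z]`. -/
def Ctx.app {σ : Type} : Ctx σ → SP σ → SP σ
  | .hole, z => z
  | .seqL c w, z => SP.seq (c.app z) w
  | .seqR w c, z => SP.seq w (c.app z)
  | .parL c w, z => SP.par (c.app z) w
  | .parR w c, z => SP.par w (c.app z)

/-- `c` distinguishes `w1` and `w2` in `R`: exactly one of `c[w1]`, `c[w2]` is accepted. -/
def Distinguishes {σ M : Type} (R : Recognizer σ M) (c : Ctx σ) (w1 w2 : SP σ) : Prop :=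
  ¬ (R.accepts (c.app w1) ↔ R.accepts (c.app w2))

/-- Every state admits an access sequence. -/
def ReachablePR {σ M : Type} (R : Recognizer σ M) : Prop :=
  ∀ m : M, ∃ w : SP σ, R.eval w = m

/-- A minimal recognizer: reachable, and any two distinct states (given by
access sequences) are distinguished by some 1-context. -/
def MinimalPR {σ M : Type} (R : Recognizer σ M) : Prop :=
  ReachablePR R ∧ ∀ w1 w2 : SP σ, R.eval w1 ≠ R.eval w2 → ∃ c : Ctx σ, Distinguishes R c w1 w2

/-- A characterisation set: contains □ and distinguishes every distinguishable
pair of states (given by access sequences). -/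
def CharSet {σ M : Type} (R : Recognizer σ M) (W : Set (Ctx σ)) : Prop :=
  Ctx.hole ∈ W ∧
  ∀ w1 w2 : SP σ, (∃ c : Ctx σ, Distinguishes R c w1 w2) → ∃ c ∈ W, Distinguishes R c w1 w2

/-- The lists of states along the root-to-leaf branches of the evaluation tree
of the syntactic term `t` in the recognizer `R`. -/
def Recognizer.branches {σ M : Type} (R : Recognizer σ M) : SPTerm σ → List (List M)
  | .eps => [[R.str.one]]
  | .letter a => [[R.i a]]
  | .seq t u => (R.branches t ++ R.branches u).map
      (fun b => termEval R.str R.i (.seq t u) :: b)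
  | .par t u => (R.branches t ++ R.branches u).map
      (fun b => termEval R.str R.i (.par t u) :: b)

def SPTerm.size {σ : Type} : SPTerm σ → Nat
  | .eps => 1
  | .letter _ => 1
  | .seq t u => t.size + u.size + 1
  | .par t u => t.size + u.size + 1

/-- Every state on a branch of the evaluation tree of `t` is the evaluation of
some subterm of `t` (hence of a term of size at most that of `t`). -/
theorem mem_branch_eval {σ M : Type} (R : Recognizer σ M) :
    ∀ t : SPTerm σ, ∀ b ∈ R.branches t, ∀ x ∈ b,
      ∃ s : SPTerm σ, termEval R.str R.i s = x ∧ s.size ≤ t.size := by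
  intro t
  induction t with
  | eps =>
    intro b hb x hx
    simp [Recognizer.branches] at hb; subst hb
    simp at hx; subst hx
    exact ⟨.eps, rfl, le_refl _⟩
  | letter a =>
    intro b hb x hx
    simp [Recognizer.branches] at hb; subst hb
    simp at hx; subst hx
    exact ⟨.letter a, rfl, le_refl _⟩
  | seq t u iht ihu =>
    intro b hb x hx
    simp only [Recognizer.branches, List.mem_map, List.mem_append] at hb
    obtain ⟨b', hb', rfl⟩ := hb
    rcases List.mem_cons.mp hx with rfl | hx'
    · exact ⟨.seq t u, rfl, le_refl _⟩
    · rcases hb' with h | h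
      · obtain ⟨s, hs, hsz⟩ := iht b' h x hx'
        exact ⟨s, hs, hsz.trans (by simp [SPTerm.size]; omega)⟩
      · obtain ⟨s, hs, hsz⟩ := ihu b' h x hx'
        exact ⟨s, hs, hsz.trans (by simp [SPTerm.size]; omega)⟩
  | par t u iht ihu =>
    intro b hb x hx
    simp only [Recognizer.branches, List.mem_map, List.mem_append] at hb
    obtain ⟨b', hb', rfl⟩ := hb
    rcases List.mem_cons.mp hx with rfl | hx'
    · exact ⟨.par t u, rfl, le_refl _⟩
    · rcases hb' with h | h
      · obtain ⟨s, hs, hsz⟩ := iht b' h x hx'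
        exact ⟨s, hs, hsz.trans (by simp [SPTerm.size]; omega)⟩
      · obtain ⟨s, hs, hsz⟩ := ihu b' h x hx'
        exact ⟨s, hs, hsz.trans (by simp [SPTerm.size]; omega)⟩

/-- If some branch of the evaluation tree of `t` has a repetition, then there
is a strictly smaller term with the same evaluation. -/
theorem shrink_of_dup {σ M : Type} (R : Recognizer σ M) :
    ∀ t : SPTerm σ, ∀ b ∈ R.branches t, ¬ b.Nodup →
      ∃ t' : SPTerm σ, termEval R.str R.i t' = termEval R.str R.i t ∧
        t'.size < t.size := by
  intro t
  induction t with
  | eps =>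
    intro b hb hdup
    simp [Recognizer.branches] at hb; subst hb
    simp at hdup
  | letter a =>
    intro b hb hdup
    simp [Recognizer.branches] at hb; subst hb
    simp at hdup
  | seq t u iht ihu =>
    intro b hb hdup
    simp only [Recognizer.branches, List.mem_map, List.mem_append] at hb
    obtain ⟨b', hb', rfl⟩ := hb
    by_cases hnd : b'.Nodup
    · -- repetition involves the head
      have hmem : termEval R.str R.i (.seq t u) ∈ b' := by
        by_contra hmem
        exact hdup (List.nodup_cons.mpr ⟨hmem, hnd⟩)
      rcases hb' with h | h
      · obtain ⟨s, hs, hsz⟩ := mem_branch_eval R t b' h _ hmem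
        exact ⟨s, hs, by simp [SPTerm.size] at hsz ⊢; omega⟩
      · obtain ⟨s, hs, hsz⟩ := mem_branch_eval R u b' h _ hmem
        exact ⟨s, hs, by simp [SPTerm.size] at hsz ⊢; omega⟩
    · rcases hb' with h | h
      · obtain ⟨t', ht', hsz⟩ := iht b' h hnd
        exact ⟨.seq t' u, by simp [termEval, ht'], by simp [SPTerm.size]; omega⟩
      · obtain ⟨u', hu', hsz⟩ := ihu b' h hnd
        exact ⟨.seq t u', by simp [termEval, hu'], by simp [SPTerm.size]; omega⟩
  | par t u iht ihu =>
    intro b hb hdup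
    simp only [Recognizer.branches, List.mem_map, List.mem_append] at hb
    obtain ⟨b', hb', rfl⟩ := hb
    by_cases hnd : b'.Nodup
    · have hmem : termEval R.str R.i (.par t u) ∈ b' := by
        by_contra hmem
        exact hdup (List.nodup_cons.mpr ⟨hmem, hnd⟩)
      rcases hb' with h | h
      · obtain ⟨s, hs, hsz⟩ := mem_branch_eval R t b' h _ hmem
        exact ⟨s, hs, by simp [SPTerm.size] at hsz ⊢; omega⟩
      · obtain ⟨s, hs, hsz⟩ := mem_branch_eval R u b' h _ hmem
        exact ⟨s, hs, by simp [SPTerm.size] at hsz ⊢; omega⟩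
    · rcases hb' with h | h
      · obtain ⟨t', ht', hsz⟩ := iht b' h hnd
        exact ⟨.par t' u, by simp [termEval, ht'], by simp [SPTerm.size]; omega⟩
      · obtain ⟨u', hu', hsz⟩ := ihu b' h hnd
        exact ⟨.par t u', by simp [termEval, hu'], by simp [SPTerm.size]; omega⟩

theorem exists_nodup_term {σ M : Type} (R : Recognizer σ M) :
    ∀ t : SPTerm σ, ∃ t' : SPTerm σ,
      termEval R.str R.i t' = termEval R.str R.i t ∧
      ∀ b ∈ R.branches t', b.Nodup := by
  intro t
  generalize hn : t.size = n
  induction n using Nat.strong_induction_on generalizing t with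
  | _ n ih =>
    by_cases h : ∀ b ∈ R.branches t, b.Nodup
    · exact ⟨t, rfl, h⟩
    · push_neg at h
      obtain ⟨b, hb, hdup⟩ := h
      obtain ⟨t', ht', hsz⟩ := shrink_of_dup R t b hb hdup
      obtain ⟨t'', h1, h2⟩ := ih t'.size (by omega) t' rfl
      exact ⟨t'', h1.trans ht', h2⟩

/-- every state `q` with an access sequence admits an access
sequence whose evaluation tree has no repetition of states along any branch. -/
theorem access_sequence_without_repetition {σ M : Type} (R : Recognizer σ M)
    (hmin : MinimalPR R) (q : M) (w : SP σ) (hw : R.eval w = q) :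
    ∃ t : SPTerm σ, R.eval (SP.mk t) = q ∧ ∀ b ∈ R.branches t, b.Nodup := by
  obtain ⟨t0, rfl⟩ := Quotient.exists_rep w
  obtain ⟨t, ht, hnd⟩ := exists_nodup_term R t0
  exact ⟨t, by rw [← hw]; exact ht, hnd⟩
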